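/- arXiv:1810.04476 — 9 statements merged into one kernel-verified Lean document; each statement's English description precedes it below -/
import Mathlib

section
/- Let A ⊆ R be commutative rings, with R Noetherian, and let I be a p-primary ideal of R for some prime ideal p. Then the differential power I⟨n⟩_A is also p-primary for every n ≥ 1. -/
/-- The `A`-linear differential operators on `R` of order at most `n`,
defined inductively: `D^0` consists of the `R`-linear endomorphisms (multiplications),
and `δ ∈ D^{n+1}` iff `[δ, r] ∈ D^n` for all `r : R`. -/
def DiffOp (A R : Type*) [CommRing A] [CommRing R] [Algebra A R] : ℕ → Set (R →ₗ[A] R)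
  | 0 => {δ | ∃ s : R, ∀ x : R, δ x = s * x}
  | n + 1 => {δ | ∀ r : R,
      δ ∘ₗ LinearMap.mulLeft A r - LinearMap.mulLeft A r ∘ₗ δ ∈ DiffOp A R n}

/-- The `n`-th `A`-linear differential power of an ideal `I ⊆ R`:
`I⟨n⟩_A = {f ∈ R | δ f ∈ I for all δ ∈ D^{n-1}_{R|A}}`. -/
def diffPower (A : Type*) {R : Type*} [CommRing A] [CommRing R] [Algebra A R]
    (I : Ideal R) (n : ℕ) : Set R :=
  {f : R | ∀ δ ∈ DiffOp A R (n - 1), δ f ∈ I}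

section Aux

variable {A R : Type*} [CommRing A] [CommRing R] [Algebra A R]

lemma DiffOp.comm_apply (δ : R →ₗ[A] R) (r f : R) :
    (δ ∘ₗ LinearMap.mulLeft A r - LinearMap.mulLeft A r ∘ₗ δ) f = δ (r * f) - r * δ f := by
  simp

lemma zero_mem_diffOp : ∀ m : ℕ, (0 : R →ₗ[A] R) ∈ DiffOp A R m
  | 0 => ⟨0, fun x => by simp⟩
  | m + 1 => fun r => by
      have h : (0 : R →ₗ[A] R) ∘ₗ LinearMap.mulLeft A r - LinearMap.mulLeft A r ∘ₗ 0 = 0 := by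
        ext x; simp
      rw [h]; exact zero_mem_diffOp m

lemma diffOp_mono : ∀ m : ℕ, DiffOp A R m ⊆ DiffOp A R (m + 1)
  | 0 => fun δ hδ r => by
      obtain ⟨s, hs⟩ := hδ
      have h : δ ∘ₗ LinearMap.mulLeft A r - LinearMap.mulLeft A r ∘ₗ δ = 0 := by
        ext x
        simp only [LinearMap.sub_apply, LinearMap.comp_apply, LinearMap.mulLeft_apply,
          LinearMap.zero_apply, hs]
        ring
      rw [h]; exact zero_mem_diffOp 0
  | m + 1 => fun δ hδ r => diffOp_mono m (hδ r)

lemma id_mem_diffOp : ∀ m : ℕ, (LinearMap.id : R →ₗ[A] R) ∈ DiffOp A R m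
  | 0 => ⟨1, fun x => by simp⟩
  | m + 1 => diffOp_mono m (id_mem_diffOp m)

variable (A) in
/-- The differential power as an ideal. -/
def diffIdeal (I : Ideal R) (m : ℕ) : Ideal R where
  carrier := {f : R | ∀ δ ∈ DiffOp A R m, δ f ∈ I}
  zero_mem' := fun δ _ => by simpa using I.zero_mem
  add_mem' := fun {a b} ha hb δ hδ => by
    rw [map_add]; exact I.add_mem (ha δ hδ) (hb δ hδ)
  smul_mem' := fun r f hf => by
    match m with
    | 0 =>
      intro δ hδ
      obtain ⟨s, hs⟩ := hδ
      have : δ (r • f) = r * (s * f) := by rw [smul_eq_mul, hs]; ring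
      rw [this, ← hs]
      exact I.mul_mem_left r (hf δ ⟨s, hs⟩)
    | m + 1 =>
      intro δ hδ
      have hc : δ ∘ₗ LinearMap.mulLeft A r - LinearMap.mulLeft A r ∘ₗ δ ∈ DiffOp A R (m + 1) :=
        diffOp_mono m (hδ r)
      have h1 : (δ ∘ₗ LinearMap.mulLeft A r - LinearMap.mulLeft A r ∘ₗ δ) f ∈ I := hf _ hc
      have h2 : r * δ f ∈ I := I.mul_mem_left r (hf δ hδ)
      have : δ (r • f) = (δ ∘ₗ LinearMap.mulLeft A r - LinearMap.mulLeft A r ∘ₗ δ) f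
          + r * δ f := by
        rw [DiffOp.comm_apply, smul_eq_mul]; ring
      rw [this]
      exact I.add_mem h1 h2

lemma diffIdeal_le (I : Ideal R) (m : ℕ) : diffIdeal A I m ≤ I := fun f hf => by
  simpa using hf LinearMap.id (id_mem_diffOp m)

lemma diffIdeal_antitone (I : Ideal R) (m : ℕ) :
    diffIdeal A I (m + 1) ≤ diffIdeal A I m :=
  fun f hf δ hδ => hf δ (diffOp_mono m hδ)

lemma pow_le_diffIdeal (I : Ideal R) : ∀ m : ℕ, I ^ (m + 1) ≤ diffIdeal A I m
  | 0 => by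
      intro f hf δ hδ
      obtain ⟨s, hs⟩ := hδ
      rw [hs]
      exact I.mul_mem_left s (by simpa using hf)
  | m + 1 => by
      intro f hf δ hδ
      rw [pow_succ] at hf
      refine Submodule.mul_induction_on hf ?_ ?_
      · intro g hg r hr
        have h1 : (δ ∘ₗ LinearMap.mulLeft A r - LinearMap.mulLeft A r ∘ₗ δ) g ∈ I :=
          pow_le_diffIdeal I m hg _ (hδ r)
        have : δ (g * r) = (δ ∘ₗ LinearMap.mulLeft A r - LinearMap.mulLeft A r ∘ₗ δ) g
            + r * δ g := by
          rw [DiffOp.comm_apply]; ring_nf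
        rw [this]
        exact I.add_mem h1 (I.mul_mem_right _ hr)
      · intro x y hx hy
        rw [map_add]; exact I.add_mem hx hy

lemma diffIdeal_key (I : Ideal R) (hI : I ≠ ⊤ ∧ ∀ {x y : R}, x * y ∈ I → x ∈ I ∨ y ∈ I.radical) :
    ∀ m : ℕ, ∀ a b : R, a ∉ I.radical → a * b ∈ diffIdeal A I m → b ∈ diffIdeal A I m
  | 0 => by
      intro a b ha hab
      have hab' : a * b ∈ I := diffIdeal_le I 0 hab
      have hb : b ∈ I := by
        rcases hI.2 (show b * a ∈ I by rwa [mul_comm]) with h | h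
        · exact h
        · exact absurd h ha
      intro δ hδ
      obtain ⟨s, hs⟩ := hδ
      rw [hs]
      exact I.mul_mem_left s hb
  | m + 1 => by
      intro a b ha hab
      have hb : b ∈ diffIdeal A I m :=
        diffIdeal_key I hI m a b ha (diffIdeal_antitone I m hab)
      intro δ hδ
      have h1 : (δ ∘ₗ LinearMap.mulLeft A a - LinearMap.mulLeft A a ∘ₗ δ) b ∈ I :=
        hb _ (hδ a)
      have h2 : δ (a * b) ∈ I := hab δ hδ
      have h3 : δ b * a ∈ I := by
        have : δ b * a = δ (a * b)
            - (δ ∘ₗ LinearMap.mulLeft A a - LinearMap.mulLeft A a ∘ₗ δ) b := by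
          rw [DiffOp.comm_apply]; ring
        rw [this]
        exact I.sub_mem h2 h1
      rcases hI.2 h3 with h | h
      · exact h
      · exact absurd h ha

end Aux

/-- If `R` is Noetherian and `I` is `p`-primary, then the differential power `I⟨n⟩_A`
is an ideal which is again `p`-primary. -/
theorem diffPower_isPrimary (A R : Type*) [CommRing A] [CommRing R] [Algebra A R]
    [IsNoetherianRing R] (p I : Ideal R) (hp : p.IsPrime)
    (hI : I.IsPrimary) (hrad : I.radical = p) (n : ℕ) (hn : 1 ≤ n) :
    ∃ J : Ideal R, (J : Set R) = diffPower A I n ∧ J.IsPrimary ∧ J.radical = p := by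
  obtain ⟨m, rfl⟩ : ∃ m, n = m + 1 := ⟨n - 1, (Nat.succ_pred_eq_of_pos hn).symm⟩
  have hradJ : (diffIdeal A I m).radical = p := by
    apply le_antisymm
    · rw [← hrad]
      exact Ideal.radical_mono (diffIdeal_le I m)
    · rw [← hrad]
      calc I.radical = (I ^ (m + 1)).radical :=
            (Ideal.radical_pow (I := I) (Nat.succ_ne_zero m)).symm
        _ ≤ (diffIdeal A I m).radical := Ideal.radical_mono (pow_le_diffIdeal I m)
  have hI' := Ideal.isPrimary_iff.mp hI
  refine ⟨diffIdeal A I m, rfl, Ideal.isPrimary_iff.mpr ⟨?_, ?_⟩, hradJ⟩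
  · intro h
    apply hI'.1
    rw [eq_top_iff]
    intro x _
    have h1 : (1 : R) ∈ diffIdeal A I m := by rw [h]; trivial
    have h2 := diffIdeal_le I m h1
    simpa using I.mul_mem_left x h2
  · intro x y hxy
    by_cases hy : y ∈ I.radical
    · right
      rw [hradJ, ← hrad]
      exact hy
    · left
      exact diffIdeal_key I hI' m y x hy (by rwa [mul_comm])
end

section
/- Let A ⊆ R be commutative rings and I an ideal of R. Then I is a D_{R|A}-ideal (i.e., δ(I) ⊆ I for every A-linear differential operator δ on R) if and only if I⟨n⟩_A = I for every integer n ≥ 1. -/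
lemma DiffOp.mono_succ {A R : Type*} [CommRing A] [CommRing R] [Algebra A R]
    {n : ℕ} {δ : R →ₗ[A] R} (h : δ ∈ DiffOp A R n) : δ ∈ DiffOp A R (n + 1) := by
  induction n generalizing δ with
  | zero =>
    obtain ⟨s, hs⟩ := h
    intro r
    refine ⟨0, fun x => ?_⟩
    simp only [LinearMap.sub_apply, LinearMap.comp_apply, LinearMap.mulLeft_apply, hs]
    ring
  | succ n ih =>
    intro r
    exact ih (h r)

lemma DiffOp.id_mem {A R : Type*} [CommRing A] [CommRing R] [Algebra A R]
    (n : ℕ) : (LinearMap.id : R →ₗ[A] R) ∈ DiffOp A R n := by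
  induction n with
  | zero => exact ⟨1, fun x => (one_mul x).symm⟩
  | succ n ih => exact DiffOp.mono_succ ih

/-- An ideal `I` is a `D_{R|A}`-ideal (stable under all `A`-linear differential
operators) if and only if `I⟨n⟩_A = I` for every `n ≥ 1`. -/
theorem isDIdeal_iff_diffPower_eq (A R : Type*) [CommRing A] [CommRing R] [Algebra A R]
    (I : Ideal R) :
    (∀ n : ℕ, ∀ δ ∈ DiffOp A R n, ∀ f ∈ I, δ f ∈ I) ↔
      (∀ n : ℕ, 1 ≤ n → diffPower A I n = (I : Set R)) := by
  constructor
  · intro h n _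
    ext f
    constructor
    · intro hf
      simpa using hf LinearMap.id (DiffOp.id_mem (n - 1))
    · intro hf δ hδ
      exact h _ δ hδ f hf
  · intro h n δ hδ f hf
    have := h (n + 1) (Nat.le_add_left 1 n)
    have hf' : f ∈ diffPower A I (n + 1) := this ▸ hf
    exact hf' δ (by simpa using hδ)
end

section
/- Let A ⊆ R be commutative rings and J an ideal of R. Then the differential core P_A(J) = ⋂_{n≥1} J⟨n⟩_A is a D_{R|A}-ideal, i.e., δ(P_A(J)) ⊆ P_A(J) for every A-linear differential operator δ on R. -/
section Aux
variable {A R : Type*} [CommRing A] [CommRing R] [Algebra A R]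

lemma diffOp_add : ∀ n : ℕ, ∀ δ ε : R →ₗ[A] R,
    δ ∈ DiffOp A R n → ε ∈ DiffOp A R n → δ + ε ∈ DiffOp A R n
  | 0, δ, ε, ⟨s, hs⟩, ⟨t, ht⟩ => ⟨s + t, fun x => by simp [hs, ht, add_mul]⟩
  | n+1, δ, ε, hδ, hε => fun r => by
      have h : (δ + ε) ∘ₗ LinearMap.mulLeft A r - LinearMap.mulLeft A r ∘ₗ (δ + ε)
          = (δ ∘ₗ LinearMap.mulLeft A r - LinearMap.mulLeft A r ∘ₗ δ)
            + (ε ∘ₗ LinearMap.mulLeft A r - LinearMap.mulLeft A r ∘ₗ ε) := by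
        simp only [LinearMap.add_comp, LinearMap.comp_add]; abel
      rw [h]; exact diffOp_add n _ _ (hδ r) (hε r)

lemma diffOp_mono_s5 : ∀ n : ℕ, ∀ δ : R →ₗ[A] R, δ ∈ DiffOp A R n → δ ∈ DiffOp A R (n+1)
  | 0, δ, ⟨s, hs⟩ => fun r => ⟨0, fun x => by
      simp [hs, LinearMap.mulLeft_apply]; ring⟩
  | n+1, δ, hδ => fun r => diffOp_mono_s5 n _ (hδ r)

lemma diffOp_comp_mulLeft : ∀ k : ℕ, ∀ ε : R →ₗ[A] R, ε ∈ DiffOp A R k → ∀ s : R,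
    ε ∘ₗ LinearMap.mulLeft A s ∈ DiffOp A R k
  | 0, ε, ⟨t, ht⟩, s => ⟨t * s, fun x => by simp [ht]; ring⟩
  | k+1, ε, hε, s => fun r => by
      have h : (ε ∘ₗ LinearMap.mulLeft A s) ∘ₗ LinearMap.mulLeft A r
            - LinearMap.mulLeft A r ∘ₗ (ε ∘ₗ LinearMap.mulLeft A s)
          = (ε ∘ₗ LinearMap.mulLeft A r - LinearMap.mulLeft A r ∘ₗ ε)
            ∘ₗ LinearMap.mulLeft A s := by
        ext x; simp [LinearMap.mulLeft_apply]; ring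
      rw [h]; exact diffOp_comp_mulLeft k _ (hε r) s

lemma diffOp_mulLeft_comp : ∀ k : ℕ, ∀ ε : R →ₗ[A] R, ε ∈ DiffOp A R k → ∀ s : R,
    LinearMap.mulLeft A s ∘ₗ ε ∈ DiffOp A R k
  | 0, ε, ⟨t, ht⟩, s => ⟨s * t, fun x => by simp [ht]; ring⟩
  | k+1, ε, hε, s => fun r => by
      have h : (LinearMap.mulLeft A s ∘ₗ ε) ∘ₗ LinearMap.mulLeft A r
            - LinearMap.mulLeft A r ∘ₗ (LinearMap.mulLeft A s ∘ₗ ε)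
          = LinearMap.mulLeft A s
            ∘ₗ (ε ∘ₗ LinearMap.mulLeft A r - LinearMap.mulLeft A r ∘ₗ ε) := by
        ext x; simp [LinearMap.mulLeft_apply]; ring
      rw [h]; exact diffOp_mulLeft_comp k _ (hε r) s

lemma diffOp_eq_mulLeft {δ : R →ₗ[A] R} {s : R} (hs : ∀ x, δ x = s * x) :
    δ = LinearMap.mulLeft A s := by ext x; simp [hs]

lemma diffOp_comp : ∀ N : ℕ, ∀ m k : ℕ, m + k = N →
    ∀ δ ε : R →ₗ[A] R, δ ∈ DiffOp A R m → ε ∈ DiffOp A R k →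
    ε ∘ₗ δ ∈ DiffOp A R N := by
  intro N
  induction N using Nat.strong_induction_on with
  | _ N ih =>
    intro m k hmk δ ε hδ hε
    match m, k, hmk with
    | 0, k, hmk =>
      obtain ⟨s, hs⟩ := hδ
      rw [diffOp_eq_mulLeft hs]
      rw [zero_add] at hmk; subst hmk
      exact diffOp_comp_mulLeft k ε hε s
    | m+1, 0, hmk =>
      obtain ⟨t, ht⟩ := hε
      rw [diffOp_eq_mulLeft ht]
      subst hmk
      exact diffOp_mulLeft_comp (m+1) δ hδ t
    | m+1, k+1, hmk =>
      have hN : N = m + k + 2 := by omega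
      subst hN
      intro r
      have h : (ε ∘ₗ δ) ∘ₗ LinearMap.mulLeft A r - LinearMap.mulLeft A r ∘ₗ (ε ∘ₗ δ)
          = (ε ∘ₗ LinearMap.mulLeft A r - LinearMap.mulLeft A r ∘ₗ ε) ∘ₗ δ
            + ε ∘ₗ (δ ∘ₗ LinearMap.mulLeft A r - LinearMap.mulLeft A r ∘ₗ δ) := by
        simp only [LinearMap.comp_sub, LinearMap.sub_comp, LinearMap.comp_assoc]
        abel
      rw [h]
      have h1 : (ε ∘ₗ LinearMap.mulLeft A r - LinearMap.mulLeft A r ∘ₗ ε) ∘ₗ δ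
          ∈ DiffOp A R (m + k + 1) :=
        ih (m + k + 1) (by omega) (m+1) k (by omega) δ _ hδ (hε r)
      have h2 : ε ∘ₗ (δ ∘ₗ LinearMap.mulLeft A r - LinearMap.mulLeft A r ∘ₗ δ)
          ∈ DiffOp A R (m + k + 1) :=
        ih (m + k + 1) (by omega) m (k+1) (by omega) _ ε (hδ r) hε
      exact diffOp_add _ _ _ h1 h2

end Aux

/-- The differential core `P_A(J) = ⋂_{n ≥ 1} J⟨n⟩_A` is a `D_{R|A}`-ideal:
it is stable under every `A`-linear differential operator on `R`. -/
theorem diffCore_isDIdeal (A R : Type*) [CommRing A] [CommRing R] [Algebra A R]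
    (J : Ideal R) :
    ∀ m : ℕ, ∀ δ ∈ DiffOp A R m, ∀ f ∈ ⋂ n ∈ Set.Ici 1, diffPower A J n,
      δ f ∈ ⋂ n ∈ Set.Ici 1, diffPower A J n := by
  intro m δ hδ f hf
  rw [Set.mem_iInter₂] at hf ⊢
  intro n hn ε hε
  have hn1 : (1 : ℕ) ≤ n := hn
  have hcomp : ε ∘ₗ δ ∈ DiffOp A R (n + m - 1) :=
    diffOp_comp (n + m - 1) m (n - 1) (by omega) δ ε hδ hε
  have := hf (n + m) (by simp; omega) (ε ∘ₗ δ) hcomp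
  simpa using this
end

section
/- Let R be a commutative ring, A ⊆ R a subring, I ⊆ J ideals of R, R' = R/I, A' = A/(A ∩ I), and J' the image of J in R'. If I is a D_{R|A}-ideal and J' is a D_{R'|A'}-ideal, then J is a D_{R|A}-ideal. -/
section Descend
variable {A R : Type*} [CommRing A] [CommRing R] [Algebra A R] {I : Ideal R}

set_option maxHeartbeats 1000000 in
/-- An `A`-linear operator preserving `I` descends to the quotient `R ⧸ I`. -/
def descend (δ : R →ₗ[A] R) (h : I.restrictScalars A ≤ (I.restrictScalars A).comap δ) :
    (R ⧸ I) →ₗ[A] (R ⧸ I) := Submodule.mapQ _ _ δ h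

set_option maxHeartbeats 1000000 in
lemma descend_mk (δ : R →ₗ[A] R) (h : I.restrictScalars A ≤ (I.restrictScalars A).comap δ)
    (x : R) : descend δ h (Ideal.Quotient.mk I x) = Ideal.Quotient.mk I (δ x) := by
  unfold descend; rfl

lemma descend_diffOp (hI : ∀ m : ℕ, ∀ δ ∈ DiffOp A R m, ∀ f ∈ I, δ f ∈ I) :
    ∀ m : ℕ, ∀ δ : R →ₗ[A] R, ∀ hδ : δ ∈ DiffOp A R m,
      descend δ (fun x hx => hI m δ hδ x hx) ∈ DiffOp A (R ⧸ I) m := by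
  intro m
  induction m with
  | zero =>
    intro δ hδ
    obtain ⟨s, hs⟩ := hδ
    refine ⟨Ideal.Quotient.mk I s, ?_⟩
    intro y
    obtain ⟨x, rfl⟩ := Ideal.Quotient.mk_surjective y
    change Ideal.Quotient.mk I (δ x) = _
    rw [hs, map_mul]
  | succ n ih =>
    intro δ hδ r'
    obtain ⟨r, rfl⟩ := Ideal.Quotient.mk_surjective r'
    have hε : (δ ∘ₗ LinearMap.mulLeft A r - LinearMap.mulLeft A r ∘ₗ δ) ∈ DiffOp A R n := hδ r
    have key : descend δ (fun x hx => hI (n+1) δ hδ x hx) ∘ₗ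
          LinearMap.mulLeft A (Ideal.Quotient.mk I r) -
        LinearMap.mulLeft A (Ideal.Quotient.mk I r) ∘ₗ
          descend δ (fun x hx => hI (n+1) δ hδ x hx) =
        descend (δ ∘ₗ LinearMap.mulLeft A r - LinearMap.mulLeft A r ∘ₗ δ)
          (fun x hx => hI n _ hε x hx) := by
      apply LinearMap.ext
      intro y
      obtain ⟨x, rfl⟩ := Ideal.Quotient.mk_surjective y
      simp only [LinearMap.sub_apply, LinearMap.comp_apply, LinearMap.mulLeft_apply,
        descend_mk, ← map_mul, ← map_sub]
      change Ideal.Quotient.mk I (δ (r * x)) - Ideal.Quotient.mk I r * Ideal.Quotient.mk I (δ x) =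
        Ideal.Quotient.mk I ((δ ∘ₗ LinearMap.mulLeft A r - LinearMap.mulLeft A r ∘ₗ δ) x)
      simp only [LinearMap.sub_apply, LinearMap.comp_apply, LinearMap.mulLeft_apply, ← map_mul, ← map_sub]
    rw [key]
    exact ih _ hε

end Descend

/-- If `I ⊆ J` are ideals of `R`, `I` is a `D_{R|A}`-ideal, and the image `J'` of `J`
in `R' = R/I` is a `D_{R'|A'}`-ideal (scalars act through the image `A'` of `A`,
so `A'`-linearity coincides with `A`-linearity), then `J` is a `D_{R|A}`-ideal. -/
theorem dIdeal_of_quotient (A R : Type*) [CommRing A] [CommRing R] [Algebra A R]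
    (I J : Ideal R) (hIJ : I ≤ J)
    (hI : ∀ m : ℕ, ∀ δ ∈ DiffOp A R m, ∀ f ∈ I, δ f ∈ I)
    (hJ' : ∀ m : ℕ, ∀ δ ∈ DiffOp A (R ⧸ I) m, ∀ f ∈ J.map (Ideal.Quotient.mk I),
        δ f ∈ J.map (Ideal.Quotient.mk I)) :
    ∀ m : ℕ, ∀ δ ∈ DiffOp A R m, ∀ f ∈ J, δ f ∈ J := by
  intro m δ hδ f hf
  have h := hJ' m (descend δ (fun x hx => hI m δ hδ x hx))
    (descend_diffOp hI m δ hδ) (Ideal.Quotient.mk I f) (Ideal.mem_map_of_mem _ hf)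
  change Ideal.Quotient.mk I (δ f) ∈ _ at h
  exact (Ideal.mem_quotient_iff_mem hIJ).mp h
end

section
/- Let (R,m,k) be a commutative Noetherian local ring and M a finitely generated R-module. Consider the exact sequence 0 → Hom_R(M,m) → Hom_R(M,R) → Q → 0 where the first map is induced by the inclusion m ⊆ R. Then the free rank of M (the maximal rank of a free direct summand of M) equals the dimension of Q as a k-vector space. -/
/-- The free rank of an `R`-module `M`: the largest `s` such that `M` admits a
direct sum decomposition `M ≅ R^s ⊕ N`. -/
noncomputable def freeRank (R M : Type*) [CommRing R] [AddCommGroup M] [Module R M] : ℕ :=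
  sSup {s : ℕ | ∃ F N : Submodule R M, IsCompl F N ∧ Nonempty (F ≃ₗ[R] (Fin s → R))}

/-- The submodule of `Hom_R(M, R)` consisting of functionals with values in the
ideal `I`, i.e. the image of `Hom_R(M, I) → Hom_R(M, R)`. -/
def homIntoIdeal (R M : Type*) [CommRing R] [AddCommGroup M] [Module R M] (I : Ideal R) :
    Submodule R (M →ₗ[R] R) where
  carrier := {φ | ∀ x : M, φ x ∈ I}
  add_mem' := fun {a b} ha hb x => by simp only [LinearMap.add_apply]; exact I.add_mem (ha x) (hb x)
  zero_mem' := fun x => by simp only [LinearMap.zero_apply]; exact I.zero_mem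
  smul_mem' := fun r φ h x => by simpa using I.mul_mem_left r (h x)

open Submodule IsLocalRing Function


open Submodule Function

section aux
variable {R M : Type*} [CommRing R] [AddCommGroup M] [Module R M]

/-- The sup of two disjoint submodules is equivalent to their product. -/
noncomputable def supEquivProdOfDisjoint (p q : Submodule R M) (h : Disjoint p q) :
    (p × q) ≃ₗ[R] ↥(p ⊔ q) := by
  have hinj : Function.Injective (p.subtype.coprod q.subtype) := by
    rw [← LinearMap.ker_eq_bot, eq_bot_iff]
    rintro ⟨a, b⟩ hab
    simp only [LinearMap.mem_ker, LinearMap.coprod_apply, Submodule.coe_subtype] at hab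
    have ha : (a : M) ∈ q := by
      have : (a : M) = -(b : M) := by rw [eq_neg_iff_add_eq_zero]; exact hab
      rw [this]; exact q.neg_mem b.2
    have ha0 : (a : M) = 0 := h.le_bot ⟨a.2, ha⟩
    have hb0 : (b : M) = 0 := by
      have := hab; rw [ha0, zero_add] at this; exact this
    simp only [Submodule.mem_bot, Prod.mk_eq_zero]
    exact ⟨Subtype.ext ha0, Subtype.ext hb0⟩
  exact (LinearEquiv.ofInjective _ hinj).trans (LinearEquiv.ofEq _ _
    (by rw [LinearMap.range_coprod, Submodule.range_subtype, Submodule.range_subtype]))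

end aux

section aux2
variable {R M : Type*} [CommRing R] [AddCommGroup M] [Module R M]

/-- If `M = F ⊕ N` with `F ≅ R^s`, and some functional `φ` is a unit on some `n ∈ N`,
then `M` has a free summand of rank `s+1`. -/
lemma succ_mem_freeRankSet {s : ℕ} (F N : Submodule R M) (hFN : IsCompl F N)
    (ε : F ≃ₗ[R] (Fin s → R)) (φ : M →ₗ[R] R) (n : M) (hn : n ∈ N)
    (hu : IsUnit (φ n)) :
    (s + 1) ∈ {s : ℕ | ∃ F N : Submodule R M, IsCompl F N ∧ Nonempty (F ≃ₗ[R] (Fin s → R))} := by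
  obtain ⟨u, hun⟩ := hu
  have hspan : span R {n} ≤ N := by
    rw [span_le, Set.singleton_subset_iff]; exact hn
  have hd : Disjoint F (span R {n}) := hFN.disjoint.mono_right hspan
  -- the complement
  refine ⟨F ⊔ span R {n}, N ⊓ LinearMap.ker φ, ⟨?_, ?_⟩, ?_⟩
  · -- disjoint
    rw [disjoint_iff, eq_bot_iff]
    intro x hx
    simp only [Submodule.mem_inf] at hx
    obtain ⟨hx1, hxN, hxker⟩ := hx
    obtain ⟨f, hf, z, hz, rfl⟩ := Submodule.mem_sup.mp hx1
    obtain ⟨r, rfl⟩ := Submodule.mem_span_singleton.mp hz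
    have hfN : f ∈ N := by
      have : f = (f + r • n) - r • n := by abel
      rw [this]
      exact N.sub_mem hxN (N.smul_mem r hn)
    have hf0 : f = 0 := by
      have := hFN.disjoint.le_bot ⟨hf, hfN⟩
      simpa using this
    subst hf0
    have : r * φ n = 0 := by
      simpa [LinearMap.mem_ker, LinearMap.map_smul, smul_eq_mul] using hxker
    have hr : r = 0 := by
      have := congrArg (· * (↑u⁻¹ : R)) this
      simpa [← hun, mul_assoc] using this
    simp [hr]
  · -- codisjoint
    rw [codisjoint_iff, eq_top_iff]
    intro x _
    have hx : x ∈ F ⊔ N := by rw [hFN.sup_eq_top]; trivial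
    obtain ⟨f, hf, y, hy, rfl⟩ := Submodule.mem_sup.mp hx
    set c : R := φ y * (↑u⁻¹ : R) with hc
    have h1 : f + c • n ∈ F ⊔ span R {n} :=
      Submodule.add_mem _ (Submodule.mem_sup_left hf)
        (Submodule.mem_sup_right ((span R {n}).smul_mem c (Submodule.mem_span_singleton_self n)))
    have h2 : y - c • n ∈ N ⊓ LinearMap.ker φ := by
      refine Submodule.mem_inf.mpr ⟨N.sub_mem hy (N.smul_mem c hn), ?_⟩
      rw [LinearMap.mem_ker, map_sub, LinearMap.map_smul, smul_eq_mul, hc, ← hun]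
      rw [mul_assoc, Units.inv_mul, mul_one, sub_self]
    have : f + y = (f + c • n) + (y - c • n) := by abel
    rw [this]
    exact Submodule.add_mem _ (Submodule.mem_sup_left h1) (Submodule.mem_sup_right h2)
  · -- the equivalence
    have hinjspan : Function.Injective (LinearMap.toSpanSingleton R M n) := by
      rw [← LinearMap.ker_eq_bot, eq_bot_iff]
      intro r hr
      simp only [LinearMap.mem_ker, LinearMap.toSpanSingleton_apply] at hr
      have : r * φ n = 0 := by
        rw [← smul_eq_mul, ← LinearMap.map_smul, hr, map_zero]
      have hr0 : r = 0 := by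
        have := congrArg (· * (↑u⁻¹ : R)) this
        simpa [← hun, mul_assoc] using this
      simp [hr0]
    have espan : ↥(span R {n}) ≃ₗ[R] R :=
      ((LinearEquiv.ofEq _ _ (LinearMap.span_singleton_eq_range R M n)).trans
        (LinearEquiv.ofInjective _ hinjspan).symm)
    have e3 : ((Fin s → R) × R) ≃ₗ[R] (Fin (s + 1) → R) :=
      ((LinearEquiv.refl R (Fin s → R)).prodCongr (LinearEquiv.funUnique (Fin 1) R R).symm).trans
        ((LinearEquiv.sumArrowLequivProdArrow (Fin s) (Fin 1) R R).symm.trans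
          (LinearEquiv.piCongrLeft' R (fun _ => R) finSumFinEquiv))
    exact ⟨((supEquivProdOfDisjoint F (span R {n}) hd).symm.trans (ε.prodCongr espan)).trans e3⟩

end aux2

section aux3
variable {R M : Type*} [CommRing R] [AddCommGroup M] [Module R M]

lemma zero_mem_freeRankSet :
    0 ∈ {s : ℕ | ∃ F N : Submodule R M, IsCompl F N ∧ Nonempty (F ≃ₗ[R] (Fin s → R))} :=
  ⟨⊥, ⊤, isCompl_bot_top, ⟨LinearEquiv.ofSubsingleton _ _⟩⟩

lemma bddAbove_freeRankSet [Nontrivial R] [Module.Finite R M] :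
    BddAbove {s : ℕ | ∃ F N : Submodule R M, IsCompl F N ∧ Nonempty (F ≃ₗ[R] (Fin s → R))} := by
  obtain ⟨k, f, hf⟩ := Module.Finite.exists_fin' R M
  refine ⟨k, fun s' hs' => ?_⟩
  obtain ⟨F, N, hFN, ⟨ε⟩⟩ := hs'
  have hproj : Function.Surjective (F.linearProjOfIsCompl N hFN) := fun x =>
    ⟨(x : M), Submodule.linearProjOfIsCompl_apply_left hFN x⟩
  exact le_of_fin_surjective R (ε.toLinearMap ∘ₗ (F.linearProjOfIsCompl N hFN) ∘ₗ f)
    (ε.surjective.comp (hproj.comp hf))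

end aux3

/-- For a finitely generated module `M` over a Noetherian local ring `(R, m, k)`,
the cokernel `Q` of `Hom_R(M, m) → Hom_R(M, R)` is a `k`-vector space of dimension
equal to the free rank of `M`, i.e. `Q ≅ k^{freerank M}`. -/
theorem freeRank_eq_dim_coker (R M : Type*) [CommRing R] [IsLocalRing R]
    [IsNoetherianRing R] [AddCommGroup M] [Module R M] [Module.Finite R M] :
    Nonempty (((M →ₗ[R] R) ⧸ homIntoIdeal R M (IsLocalRing.maximalIdeal R)) ≃ₗ[R]
      (Fin (freeRank R M) → R ⧸ IsLocalRing.maximalIdeal R)) := by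
  classical
  set I := IsLocalRing.maximalIdeal R with hI
  have hbdd : BddAbove {s : ℕ | ∃ F N : Submodule R M, IsCompl F N ∧
      Nonempty (F ≃ₗ[R] (Fin s → R))} := bddAbove_freeRankSet
  have hmem : freeRank R M ∈ {s : ℕ | ∃ F N : Submodule R M, IsCompl F N ∧
      Nonempty (F ≃ₗ[R] (Fin s → R))} :=
    Nat.sSup_mem ⟨0, zero_mem_freeRankSet⟩ hbdd
  set s := freeRank R M with hs
  obtain ⟨F, N, hFN, ⟨ε⟩⟩ := hmem
  set e : Fin s → M := fun i => ((ε.symm (Pi.single i 1) : F) : M) with he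
  set Φ : (M →ₗ[R] R) →ₗ[R] (Fin s → R ⧸ I) :=
    LinearMap.pi (fun i => I.mkQ ∘ₗ LinearMap.applyₗ (e i)) with hΦ
  have hΦapp : ∀ (φ : M →ₗ[R] R) (i : Fin s), Φ φ i = I.mkQ (φ (e i)) := by
    intro φ i; rfl
  -- surjectivity
  have hsurj : Function.Surjective Φ := by
    intro v
    choose r hr using fun i => I.mkQ_surjective (v i)
    set ψ : (Fin s → R) →ₗ[R] R := ∑ j, r j • LinearMap.proj j with hψ
    refine ⟨ψ ∘ₗ ε.toLinearMap ∘ₗ (F.linearProjOfIsCompl N hFN), funext fun i => ?_⟩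
    rw [hΦapp]
    have h1 : (F.linearProjOfIsCompl N hFN) (e i) = ε.symm (Pi.single i 1) :=
      Submodule.linearProjOfIsCompl_apply_left hFN _
    simp only [LinearMap.comp_apply, h1, LinearEquiv.coe_coe, LinearEquiv.apply_symm_apply]
    have h2 : ψ (Pi.single i 1) = r i := by
      simp [hψ, LinearMap.sum_apply, LinearMap.proj_apply, Pi.single_apply,
        Finset.sum_ite_eq', smul_eq_mul, mul_ite, mul_one, mul_zero]
    rw [h2, hr]
  -- kernel computation
  have hker : LinearMap.ker Φ = homIntoIdeal R M I := by
    ext φ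
    simp only [LinearMap.mem_ker, homIntoIdeal, Submodule.mem_mk, AddSubmonoid.mem_mk,
      AddSubsemigroup.mem_mk, Set.mem_setOf_eq]
    constructor
    · intro h x
      have hone : ∀ i, φ (e i) ∈ I := by
        intro i
        have := congrFun h i
        rw [hΦapp] at this
        exact (Submodule.Quotient.mk_eq_zero I).mp this
      -- functionals vanish (mod I) on F
      have hF : ∀ f ∈ F, φ f ∈ I := by
        intro f hf
        set g : (Fin s → R) →ₗ[R] R ⧸ I :=
          I.mkQ ∘ₗ φ ∘ₗ F.subtype ∘ₗ (ε.symm : (Fin s → R) →ₗ[R] F) with hg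
        have hg0 : g = 0 := by
          apply (Pi.basisFun R (Fin s)).ext
          intro i
          simp only [hg, Pi.basisFun_apply, LinearMap.comp_apply, LinearMap.zero_apply,
            LinearEquiv.coe_coe, Submodule.coe_subtype]
          exact (Submodule.Quotient.mk_eq_zero I).mpr (hone i)
        have := congrFun (congrArg DFunLike.coe hg0) (ε ⟨f, hf⟩)
        simp only [hg, LinearMap.comp_apply, LinearEquiv.coe_coe, LinearMap.zero_apply,
          LinearEquiv.symm_apply_apply, Submodule.coe_subtype] at this
        exact (Submodule.Quotient.mk_eq_zero I).mp this
      -- functionals land in I on N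
      have hN : ∀ y ∈ N, φ y ∈ I := by
        intro y hy
        by_contra hyI
        have hu : IsUnit (φ y) := by
          by_contra hnu
          exact hyI ((IsLocalRing.mem_maximalIdeal _).mpr (mem_nonunits_iff.mpr hnu))
        have h1 : (s + 1) ∈ {s : ℕ | ∃ F N : Submodule R M, IsCompl F N ∧
            Nonempty (F ≃ₗ[R] (Fin s → R))} :=
          succ_mem_freeRankSet F N hFN ε φ y hy hu
        have h2 : s + 1 ≤ s := hs ▸ le_csSup hbdd h1
        omega
      obtain ⟨f, hf, y, hy, rfl⟩ := Submodule.mem_sup.mp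
        (by rw [hFN.sup_eq_top]; trivial : x ∈ F ⊔ N)
      rw [map_add]
      exact I.add_mem (hF f hf) (hN y hy)
    · intro h
      funext i
      rw [hΦapp]
      exact (Submodule.Quotient.mk_eq_zero I).mpr (h (e i))
  exact ⟨(Submodule.quotEquivOfEq _ _ hker.symm).trans (Φ.quotKerEquivOfSurjective hsurj)⟩
end

section
/- Let (R,m,k) be a commutative Noetherian local ring and M a finitely generated R-module. Define N(M) = {x ∈ M | φ(x) ∈ m for all φ ∈ Hom_R(M,R)}. Then the free rank of M equals the length of M/N(M) as an R-module, and equals dim_k(M/N(M)). -/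
open IsLocalRing

/-- The length of an `R`-module `M`: the supremum of lengths of strictly increasing
chains of submodules of `M` (i.e. the Krull dimension of the lattice of submodules). -/
noncomputable def moduleLength (R M : Type*) [CommRing R] [AddCommGroup M] [Module R M] :
    WithBot ℕ∞ :=
  Order.krullDim (Submodule R M)

/-- The submodule `N(M) = {x ∈ M | φ x ∈ m for all φ ∈ Hom_R(M, R)}`. -/
def nonFreeLocus (R M : Type*) [CommRing R] [IsLocalRing R] [AddCommGroup M] [Module R M] :
    Submodule R M where
  carrier := {x | ∀ φ : M →ₗ[R] R, φ x ∈ maximalIdeal R}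
  add_mem' := fun {a b} ha hb φ => by
    simp only [map_add]; exact (maximalIdeal R).add_mem (ha φ) (hb φ)
  zero_mem' := fun φ => by simp only [map_zero]; exact (maximalIdeal R).zero_mem
  smul_mem' := fun r x h φ => by
    simp only [map_smul, smul_eq_mul]; exact (maximalIdeal R).mul_mem_left r (h φ)

/-- Submodules over `R` of a module over a quotient (more generally, an algebra with
surjective structure map) coincide with submodules over the algebra. -/
def submoduleRestrictScalarsOrderIso (R S V : Type*) [CommSemiring R] [Semiring S]
    [Algebra R S] (h : Function.Surjective (algebraMap R S)) [AddCommMonoid V]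
    [Module R V] [Module S V] [IsScalarTower R S V] :
    Submodule R V ≃o Submodule S V where
  toFun W :=
    { carrier := W
      add_mem' := fun ha hb => W.add_mem ha hb
      zero_mem' := W.zero_mem
      smul_mem' := fun c x hx => by
        obtain ⟨r, rfl⟩ := h c
        rw [IsScalarTower.algebraMap_smul]
        exact W.smul_mem r hx }
  invFun W := W.restrictScalars R
  left_inv W := SetLike.coe_injective rfl
  right_inv W := SetLike.coe_injective rfl
  map_rel_iff' := Iff.rfl

lemma krullDim_submodule_pi_field (k : Type*) [Field k] (s : ℕ) :
    Order.krullDim (Submodule k (Fin s → k)) = ((s : ℕ∞) : WithBot ℕ∞) := by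
  classical
  have key : (⨆ p : LTSeries (Submodule k (Fin s → k)), (p.length : ℕ∞)) = (s : ℕ∞) := by
    apply le_antisymm
    · refine iSup_le fun p => ?_
      have hmap : StrictMono (fun W : Submodule k (Fin s → k) => Module.finrank k W) :=
        fun W1 W2 h => Submodule.finrank_lt_finrank_of_lt h
      have h1 := LTSeries.head_add_length_le_nat (p.map _ hmap)
      rw [LTSeries.head_map, LTSeries.last_map] at h1
      have hlen : (p.map _ hmap).length = p.length := rfl
      have h2 : Module.finrank k p.last ≤ s := by
        have := Submodule.finrank_le (R := k) p.last
        rwa [Module.finrank_fin_fun] at this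
      have : p.length ≤ s := by omega
      exact_mod_cast this
    · set W : Fin (s + 1) → Submodule k (Fin s → k) :=
        fun i => Submodule.pi {j : Fin s | (i : ℕ) ≤ (j : ℕ)} (fun _ => ⊥) with hW
      have hmono : StrictMono W := by
        rw [Fin.strictMono_iff_lt_succ]
        intro i
        rw [SetLike.lt_iff_le_and_exists]
        constructor
        · intro x hx
          rw [Submodule.mem_pi] at hx ⊢
          intro j hj
          exact hx j (by simp only [Set.mem_setOf_eq, Fin.val_succ, Fin.val_castSucc] at hj ⊢; omega)
        · refine ⟨Pi.single i 1, ?_, ?_⟩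
          · rw [Submodule.mem_pi]
            intro j hj
            have hne : j ≠ i := by
              intro h; subst h
              simp at hj
            rw [Pi.single_eq_of_ne hne]; exact Submodule.zero_mem _
          · intro hmem
            rw [Submodule.mem_pi] at hmem
            have := hmem i (by simp)
            rw [Pi.single_eq_same, Submodule.mem_bot] at this; exact one_ne_zero this
      have := le_iSup (fun p : LTSeries (Submodule k (Fin s → k)) => (p.length : ℕ∞))
        (LTSeries.mk s W hmono)
      simpa using this
  rw [Order.krullDim_eq_iSup_length, key]

lemma krullDim_pi_residue (R : Type*) [CommRing R] [IsLocalRing R] (s : ℕ) :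
    Order.krullDim (Submodule R (Fin s → R ⧸ maximalIdeal R)) = ((s : ℕ∞) : WithBot ℕ∞) := by
  have hsurj : Function.Surjective (algebraMap R (R ⧸ maximalIdeal R)) := by
    rw [Ideal.Quotient.algebraMap_eq]; exact Ideal.Quotient.mk_surjective
  letI : Field (R ⧸ maximalIdeal R) := Ideal.Quotient.field _
  rw [Order.krullDim_eq_of_orderIso
    (submoduleRestrictScalarsOrderIso R (R ⧸ maximalIdeal R) (Fin s → R ⧸ maximalIdeal R) hsurj)]
  exact krullDim_submodule_pi_field _ s

/-- For a finitely generated module `M` over a Noetherian local ring `(R, m, k)`,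
the free rank of `M` equals the length of `M/N(M)` as an `R`-module, and equals
`dim_k (M/N(M))`, i.e. `M/N(M) ≅ k^{freerank M}`. -/
theorem freeRank_eq_length_quotient (R M : Type*) [CommRing R] [IsLocalRing R]
    [IsNoetherianRing R] [AddCommGroup M] [Module R M] [Module.Finite R M] :
    moduleLength R (M ⧸ nonFreeLocus R M) = (freeRank R M : ℕ∞) ∧
      Nonempty ((M ⧸ nonFreeLocus R M) ≃ₗ[R]
        (Fin (freeRank R M) → R ⧸ maximalIdeal R)) := by
  classical
  set S : Set ℕ :=
    {s : ℕ | ∃ F N : Submodule R M, IsCompl F N ∧ Nonempty (F ≃ₗ[R] (Fin s → R))} with hS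
  have hfr : freeRank R M = sSup S := rfl
  have hne : S.Nonempty :=
    ⟨0, ⊥, ⊤, isCompl_bot_top, ⟨LinearEquiv.ofSubsingleton _ _⟩⟩
  have hbdd : BddAbove S := by
    obtain ⟨n, f, hf⟩ := Module.Finite.exists_fin' R M
    refine ⟨n, fun s hs => ?_⟩
    obtain ⟨F, N, hc, ⟨e⟩⟩ := hs
    have hproj : Function.Surjective (F.linearProjOfIsCompl N hc) := fun x =>
      ⟨x, Submodule.linearProjOfIsCompl_apply_left hc x⟩
    exact le_of_fin_surjective R (e.toLinearMap ∘ₗ (F.linearProjOfIsCompl N hc) ∘ₗ f)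
      (e.surjective.comp (hproj.comp hf))
  set s := freeRank R M with hs
  have hmem : s ∈ S := hfr ▸ Nat.sSup_mem hne hbdd
  obtain ⟨F, N, hc, ⟨e⟩⟩ := hmem
  set π := F.linearProjOfIsCompl N hc with hπdef
  have hπ : ∀ x : M, x - ↑(π x) ∈ N := by
    intro x
    have h := Submodule.projection_add_projection_eq_self hc x
    have h2 : x - ↑(π x) = ↑(N.linearProjOfIsCompl F hc.symm x) := by
      rw [sub_eq_iff_eq_add']; exact h.symm
    rw [h2]
    exact (N.linearProjOfIsCompl F hc.symm x).2
  -- key maximality lemma: every functional sends N into the maximal ideal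
  have hN : ∀ (φ : M →ₗ[R] R) (x : M), x ∈ N → φ x ∈ maximalIdeal R := by
    intro φ x hx
    by_contra hout
    have hu : IsUnit (φ x) := by
      by_contra h
      exact hout ((IsLocalRing.mem_maximalIdeal _).mpr (mem_nonunits_iff.mpr h))
    set u : M := (↑hu.unit⁻¹ : R) • x with hu_def
    have hu_mem : u ∈ N := N.smul_mem _ hx
    have hφu : φ u = 1 := by
      rw [hu_def, map_smul, smul_eq_mul]; exact hu.val_inv_mul
    set T : ((Fin s → R) × R) →ₗ[R] M :=
      LinearMap.coprod (F.subtype ∘ₗ e.symm.toLinearMap) (LinearMap.toSpanSingleton R M u)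
      with hT_def
    have hTapp : ∀ v r, T (v, r) = ↑(e.symm v) + r • u := fun v r => rfl
    have hT_inj : Function.Injective T := by
      rw [← LinearMap.ker_eq_bot]
      refine (Submodule.eq_bot_iff _).mpr ?_
      rintro ⟨v, r⟩ hvr
      rw [LinearMap.mem_ker, hTapp] at hvr
      have hmem1 : (↑(e.symm v) : M) ∈ N := by
        rw [eq_neg_of_add_eq_zero_left hvr]
        exact N.neg_mem (N.smul_mem r hu_mem)
      have hv0 : (↑(e.symm v) : M) = 0 :=
        Submodule.disjoint_def.mp hc.disjoint _ (e.symm v).2 hmem1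
      have hv0' : v = 0 := by
        have : e.symm v = 0 := Subtype.ext hv0
        simpa using congrArg e this
      have hr0 : r = 0 := by
        have h3 : r • u = 0 := by rw [hv0', map_zero] at hvr; simpa using hvr
        have := congrArg φ h3
        rw [map_smul, smul_eq_mul, hφu, mul_one, map_zero] at this
        exact this
      simp [hv0', hr0, Prod.ext_iff]
    have hcompl' : IsCompl (LinearMap.range T) (N ⊓ LinearMap.ker φ) := by
      constructor
      · rw [disjoint_iff, Submodule.eq_bot_iff]
        rintro y ⟨⟨⟨v, r⟩, rfl⟩, hy2⟩
        obtain ⟨hyN, hyker⟩ := Submodule.mem_inf.mp hy2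
        rw [hTapp] at hyN hyker ⊢
        have hmem1 : (↑(e.symm v) : M) ∈ N := by
          have : (↑(e.symm v) : M) = (↑(e.symm v) + r • u) - r • u :=
            (add_sub_cancel_right _ _).symm
          rw [this]
          exact N.sub_mem hyN (N.smul_mem r hu_mem)
        have hv0 : (↑(e.symm v) : M) = 0 :=
          Submodule.disjoint_def.mp hc.disjoint _ (e.symm v).2 hmem1
        rw [LinearMap.mem_ker, map_add, hv0] at hyker
        rw [map_zero, zero_add, map_smul, smul_eq_mul, hφu, mul_one] at hyker
        rw [hv0, hyker]
        simp
      · rw [codisjoint_iff, eq_top_iff]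
        intro x _
        set z : M := x - ↑(π x) with hz_def
        have hzN : z ∈ N := hπ x
        refine Submodule.mem_sup.mpr
          ⟨T (e (π x), φ z), ⟨_, rfl⟩, z - φ z • u, ?_, ?_⟩
        · refine Submodule.mem_inf.mpr ⟨N.sub_mem hzN (N.smul_mem _ hu_mem), ?_⟩
          rw [LinearMap.mem_ker, map_sub, map_smul, smul_eq_mul, hφu, mul_one, sub_self]
        · rw [hTapp, e.symm_apply_apply]
          rw [hz_def]
          abel
    -- build the rank-(s+1) free direct summand, contradiction with maximality
    set eqv : (Fin (s + 1) → R) ≃ₗ[R] ((Fin s → R) × R) :=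
      (LinearEquiv.funCongrLeft R R finSumFinEquiv).trans
        ((LinearEquiv.sumArrowLequivProdArrow (Fin s) (Fin 1) R R).trans
          ((LinearEquiv.refl R (Fin s → R)).prodCongr
            (LinearEquiv.funUnique (Fin 1) R R)))
      with heqv
    have h_eq : LinearMap.range (T ∘ₗ eqv.toLinearMap) = LinearMap.range T := by
      rw [LinearMap.range_comp, LinearEquiv.range, Submodule.map_top]
    have hmem1 : s + 1 ∈ S := by
      refine ⟨LinearMap.range T, N ⊓ LinearMap.ker φ, hcompl', ⟨?_⟩⟩
      exact (LinearEquiv.ofEq _ _ h_eq.symm).trans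
        ((LinearEquiv.ofInjective (T ∘ₗ eqv.toLinearMap)
          (hT_inj.comp eqv.injective)).symm)
    have : s + 1 ≤ s := by
      have := le_csSup hbdd hmem1
      omega
    omega
  -- the quotient map onto k^s
  set T2 : M →ₗ[R] (Fin s → R ⧸ maximalIdeal R) :=
    (LinearMap.pi fun i => (maximalIdeal R).mkQ ∘ₗ LinearMap.proj i) ∘ₗ
      (e.toLinearMap ∘ₗ π) with hT2_def
  have hT2mem : ∀ x : M, (T2 x = 0 ↔ ∀ i, e (π x) i ∈ maximalIdeal R) := by
    intro x
    rw [funext_iff]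
    refine forall_congr' fun i => ?_
    show Submodule.Quotient.mk (e (π x) i) = (0 : R ⧸ maximalIdeal R) ↔ _
    exact Submodule.Quotient.mk_eq_zero _
  have hg : ∀ (g : (Fin s → R) →ₗ[R] R) (v : Fin s → R),
      (∀ i, v i ∈ maximalIdeal R) → g v ∈ maximalIdeal R := by
    intro g v hv
    rw [pi_eq_sum_univ v, map_sum]
    refine Ideal.sum_mem _ fun i _ => ?_
    rw [map_smul, smul_eq_mul]
    exact Ideal.mul_mem_right _ _ (hv i)
  have hker : LinearMap.ker T2 = nonFreeLocus R M := by
    ext x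
    rw [LinearMap.mem_ker, hT2mem]
    constructor
    · intro h φ
      show φ x ∈ maximalIdeal R
      have hx : φ x = φ (↑(π x) + (x - ↑(π x))) := by congr 1; abel
      rw [hx, map_add]
      refine (maximalIdeal R).add_mem ?_ (hN φ _ (hπ x))
      have : φ ↑(π x) = (φ ∘ₗ F.subtype ∘ₗ e.symm.toLinearMap) (e (π x)) := by
        simp
      rw [this]
      exact hg _ _ h
    · intro hx i
      exact hx ((LinearMap.proj i) ∘ₗ e.toLinearMap ∘ₗ π)
  have hq : Function.Surjective T2 := by
    intro w
    obtain ⟨v, hv⟩ : ∃ v : Fin s → R, ∀ i, Submodule.Quotient.mk (v i) = w i :=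
      ⟨fun i => ((maximalIdeal R).mkQ_surjective (w i)).choose,
        fun i => ((maximalIdeal R).mkQ_surjective (w i)).choose_spec⟩
    refine ⟨↑(e.symm v), ?_⟩
    funext i
    show Submodule.Quotient.mk (e (π ↑(e.symm v)) i) = w i
    rw [show π ↑(e.symm v) = e.symm v from Submodule.linearProjOfIsCompl_apply_left hc _,
      e.apply_symm_apply]
    exact hv i
  have eQ : (M ⧸ nonFreeLocus R M) ≃ₗ[R] (Fin s → R ⧸ maximalIdeal R) :=
    (Submodule.quotEquivOfEq _ _ hker.symm).trans (T2.quotKerEquivOfSurjective hq)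
  refine ⟨?_, ⟨eQ⟩⟩
  show Order.krullDim (Submodule R (M ⧸ nonFreeLocus R M)) = _
  rw [Order.krullDim_eq_of_orderIso (Submodule.orderIsoMapComap eQ)]
  exact krullDim_pi_residue R s
end

section
/- Let (R,m,K) be an F-finite F-pure local ring of prime characteristic p and let q = p^e. Then m^{F⟨q⟩} = I_e, where I_e = {r ∈ R | φ(r) ∈ m for every φ ∈ Hom_R(F^e_* R, R)}. -/
open IsLocalRing

/-- Iterating an additive `p^{-1}`-linear splitting `e` times gives a
`p^{-e}`-linear splitting. -/
theorem exists_pe_splitting {R : Type*} [CommRing R] (p : ℕ) (φ : R →+ R)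
    (hφ : ∀ a x : R, φ (a ^ p * x) = a * φ x) (hφ1 : φ 1 = 1) (e : ℕ) :
    ∃ π : R →+ R, (∀ a x : R, π (a ^ p ^ e * x) = a * π x) ∧ π 1 = 1 := by
  induction e with
  | zero => exact ⟨AddMonoidHom.id R, fun a x => by simp, rfl⟩
  | succ e ih =>
    obtain ⟨π, hπ, hπ1⟩ := ih
    refine ⟨π.comp φ, fun a x => ?_, by simp [hφ1, hπ1]⟩
    have : a ^ p ^ (e + 1) = (a ^ p ^ e) ^ p := by
      rw [← pow_mul, pow_succ]
    simp only [AddMonoidHom.comp_apply, this, hφ, hπ]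

/-- Let `(R, m, K)` be an F-finite F-pure Noetherian local ring of prime
characteristic `p` (F-finiteness: `R` is finitely generated over its subring of
`p`-th powers; F-purity: the Frobenius `R → F_* R` splits, i.e. there is an additive
`p^{-1}`-linear map `φ` with `φ 1 = 1`).  Then for `q = p^e` the differential
Frobenius power `m^{F⟨q⟩} = {f | δ f ∈ m for all R^q-linear δ : R → R}` coincides
with `I_e = {r | φ r ∈ m for every p^{-e}-linear map φ : R → R}`, the latter set
corresponding to `{r | φ(F^e_* r) ∈ m for all φ ∈ Hom_R(F^e_* R, R)}`. -/
theorem frobDiffPower_maximalIdeal_eq_Ie (R : Type*) [CommRing R] [IsLocalRing R]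
    [IsNoetherianRing R] (p : ℕ) [Fact p.Prime] [CharP R p]
    (hFF : ∃ s : Finset R, ∀ x : R, ∃ c : R → R, x = ∑ g ∈ s, c g ^ p * g)
    (hFP : ∃ φ : R →+ R, (∀ a x : R, φ (a ^ p * x) = a * φ x) ∧ φ 1 = 1)
    (e : ℕ) :
    {f : R | ∀ δ : R →+ R, (∀ a x : R, δ (a ^ p ^ e * x) = a ^ p ^ e * δ x) →
        δ f ∈ maximalIdeal R} =
      {r : R | ∀ φ : R →+ R, (∀ a x : R, φ (a ^ p ^ e * x) = a * φ x) →
        φ r ∈ maximalIdeal R} := by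
  obtain ⟨φ₀, hφ₀, hφ₀1⟩ := hFP
  obtain ⟨π, hπ, hπ1⟩ := exists_pe_splitting p φ₀ hφ₀ hφ₀1 e
  haveI : ExpChar R p := ExpChar.prime Fact.out
  ext f
  simp only [Set.mem_setOf_eq]
  constructor
  · -- LHS ⊆ RHS : compose φ with the e-iterated Frobenius
    intro hf φ hφ
    set δ : R →+ R := (iterateFrobenius R p e).toAddMonoidHom.comp φ with hδdef
    have hδ : ∀ a x : R, δ (a ^ p ^ e * x) = a ^ p ^ e * δ x := by
      intro a x
      simp [hδdef, iterateFrobenius_def, hφ, mul_pow]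
    have hmem : (φ f) ^ p ^ e ∈ maximalIdeal R := by
      have := hf δ hδ
      simpa [hδdef, iterateFrobenius_def] using this
    exact ((maximalIdeal.isMaximal R).isPrime.mem_of_pow_mem _ hmem)
  · -- RHS ⊆ LHS : use the splitting π
    intro hf δ hδ
    by_contra hm
    have hu : IsUnit (δ f) := by
      by_contra hnu
      exact hm (hnu : δ f ∈ nonunits R)
    obtain ⟨u, hu⟩ := hu
    set φ : R →+ R := π.comp ((AddMonoidHom.mulLeft ((↑u⁻¹ : R))).comp δ) with hφdef
    have hφ : ∀ a x : R, φ (a ^ p ^ e * x) = a * φ x := by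
      intro a x
      simp only [hφdef, AddMonoidHom.comp_apply, AddMonoidHom.coe_mulLeft, hδ]
      rw [show (↑u⁻¹ : R) * (a ^ p ^ e * δ x) = a ^ p ^ e * ((↑u⁻¹ : R) * δ x) by ring, hπ]
    have h1 : φ f ∈ maximalIdeal R := hf φ hφ
    have : φ f = 1 := by
      simp only [hφdef, AddMonoidHom.comp_apply, AddMonoidHom.coe_mulLeft, ← hu]
      rw [show ((↑u⁻¹ : R) * ↑u) = 1 from u.inv_mul, hπ1]
    rw [this] at h1
    exact (maximalIdeal.isMaximal R).ne_top ((Ideal.eq_top_iff_one _).mpr h1)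
end

section
/- Let A ⊆ R ⊆ S be commutative rings, I ⊆ R and J ⊆ S ideals, and π: S → R an R-linear map with π^{-1}(I) ⊆ J. Then I⟨n⟩_A ⊆ J⟨n⟩_A ∩ R for all n ≥ 1. -/
lemma conj_mem_diffOp (A R S : Type*) [CommRing A] [CommRing R]
    [CommRing S] [Algebra A R] [Algebra R S] [Algebra A S] [IsScalarTower A R S]
    (π : S →ₗ[R] R) (m : ℕ) :
    ∀ δ ∈ DiffOp A S m,
      (π.restrictScalars A ∘ₗ δ ∘ₗ (IsScalarTower.toAlgHom A R S).toLinearMap)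
        ∈ DiffOp A R m := by
  induction m with
  | zero =>
    rintro δ ⟨s, hs⟩
    refine ⟨π s, fun x => ?_⟩
    simp only [LinearMap.comp_apply, LinearMap.restrictScalars_apply,
      AlgHom.toLinearMap_apply, IsScalarTower.coe_toAlgHom', hs]
    calc π (s * algebraMap R S x) = π (x • s) := by
          rw [Algebra.smul_def, mul_comm]
      _ = x • π s := π.map_smul x s
      _ = π s * x := by rw [smul_eq_mul, mul_comm]
  | succ m ih =>
    intro δ hδ r
    have key := ih _ (hδ (algebraMap R S r))
    convert key using 1
    ext x
    simp only [LinearMap.sub_apply, LinearMap.comp_apply, LinearMap.mulLeft_apply,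
      LinearMap.restrictScalars_apply, AlgHom.toLinearMap_apply,
      IsScalarTower.coe_toAlgHom', map_mul, map_sub]
    congr 1
    rw [← Algebra.smul_def, π.map_smul, smul_eq_mul]

/-- Let `A ⊆ R ⊆ S` be rings, `I ⊆ R` and `J ⊆ S` ideals, and `π : S → R` an
`R`-linear map with `π⁻¹(I) ⊆ J`.  Then `I⟨n⟩_A ⊆ J⟨n⟩_A ∩ R` for all `n ≥ 1`. -/
theorem diffPower_subset_of_retraction (A R S : Type*) [CommRing A] [CommRing R]
    [CommRing S] [Algebra A R] [Algebra R S] [Algebra A S] [IsScalarTower A R S]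
    (I : Ideal R) (J : Ideal S) (π : S →ₗ[R] R)
    (hπ : ∀ s : S, π s ∈ I → s ∈ J) (n : ℕ) (hn : 1 ≤ n) :
    ∀ f ∈ diffPower A I n, algebraMap R S f ∈ diffPower A J n := by
  intro f hf δ hδ
  apply hπ
  have := hf _ (conj_mem_diffOp A R S π (n - 1) δ hδ)
  simpa using this
end

section
/- Let K be a field of characteristic 0 and let M = (t_{ij}) be the generic n × n matrix over the rational function field K(t_{ij} : 1 ≤ i,j ≤ n). Then for every q ≥ 1, the entries of the q-th symmetric power matrix Sym^q(M), i.e., the matrix of the K(t_{ij})-linear endomorphism of the degree-q part of K(t_{ij})[x_1,…,x_n] induced by x_i ↦ Σ_j t_{ji} x_j, are linearly independent over K. -/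
open MvPolynomial

section Aux

variable (K : Type*) [Field K] (n : ℕ)

noncomputable def symPowFactor (i : Fin n) :
    MvPolynomial (Fin n) (MvPolynomial (Fin n × Fin n) K) :=
  ∑ j : Fin n, C (X (j, i)) * X j

noncomputable def symPowProd (ν : Fin n →₀ ℕ) :
    MvPolynomial (Fin n) (MvPolynomial (Fin n × Fin n) K) :=
  ∏ i : Fin n, (symPowFactor K n i) ^ (ν i)

variable {K n}

lemma symPowProd_add_single (ν : Fin n →₀ ℕ) (i0 : Fin n) :
    symPowProd K n (ν + Finsupp.single i0 1)
      = symPowFactor K n i0 * symPowProd K n ν := by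
  simp only [symPowProd, Finsupp.add_apply, pow_add, Finset.prod_mul_distrib]
  rw [mul_comm]
  congr 1
  rw [Finset.prod_congr rfl fun i _ => by
    rw [Finsupp.single_apply, pow_ite, pow_one, pow_zero]]
  simp

lemma exists_pos_of_sum_pos (ν : Fin n →₀ ℕ) (h : ∑ i, ν i ≠ 0) :
    ∃ i0, 1 ≤ ν i0 := by
  by_contra hcon
  push_neg at hcon
  exact h (Finset.sum_eq_zero fun i _ => by have := hcon i; omega)

lemma finsupp_decompose {α : Type*} [DecidableEq α] (ν : α →₀ ℕ) (i0 : α) (h : 1 ≤ ν i0) :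
    ∃ ν' : α →₀ ℕ, ν = ν' + Finsupp.single i0 1 := by
  refine ⟨ν - Finsupp.single i0 1, ?_⟩
  ext i
  simp only [Finsupp.coe_add, Finsupp.coe_tsub, Pi.add_apply, Pi.sub_apply,
    Finsupp.single_apply]
  split_ifs with hi
  · subst hi; omega
  · omega

lemma sum_single_apply (i0 : Fin n) :
    ∑ i, (Finsupp.single i0 1 : Fin n →₀ ℕ) i = 1 := by
  simp [Finsupp.single_apply]

lemma sum_single_pair_fst (j : Fin n) (i0 : Fin n) (j' : Fin n) :
    ∑ i, (Finsupp.single (j, i0) 1 : Fin n × Fin n →₀ ℕ) (j', i)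
      = if j = j' then 1 else 0 := by
  rcases eq_or_ne j j' with rfl | hne
  · simp [Finsupp.single_apply, Prod.ext_iff]
  · simp [Finsupp.single_apply, Prod.ext_iff, hne]

lemma sum_single_pair_snd (j : Fin n) (i0 : Fin n) (i : Fin n) :
    ∑ j', (Finsupp.single (j, i0) 1 : Fin n × Fin n →₀ ℕ) (j', i)
      = if i0 = i then 1 else 0 := by
  rcases eq_or_ne i0 i with rfl | hne
  · simp [Finsupp.single_apply, Prod.ext_iff]
  · simp [Finsupp.single_apply, Prod.ext_iff, hne]

/-- Support lemma: any monomial `B` appearing in `coeff μ (symPowProd ν)`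
has row sums `μ` and column sums `ν`. -/
lemma symPowProd_support (c : ℕ) (ν : Fin n →₀ ℕ) (hc : ∑ i, ν i = c)
    (μ : Fin n →₀ ℕ) (B : Fin n × Fin n →₀ ℕ)
    (h : coeff B (coeff μ (symPowProd K n ν)) ≠ 0) :
    (∀ j, μ j = ∑ i, B (j, i)) ∧ (∀ i, ν i = ∑ j, B (j, i)) := by
  induction c generalizing ν μ B with
  | zero =>
    have hν : ν = 0 := by
      ext i
      exact (Finset.sum_eq_zero_iff.mp hc) i (Finset.mem_univ i)
    subst hν
    simp only [symPowProd, Finsupp.coe_zero, Pi.zero_apply, pow_zero,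
      Finset.prod_const_one, coeff_one] at h
    by_cases hμ : (0 : Fin n →₀ ℕ) = μ
    · rw [if_pos hμ, coeff_one] at h
      by_cases hB : (0 : Fin n × Fin n →₀ ℕ) = B
      · subst hμ; subst hB; simp
      · rw [if_neg hB] at h; exact absurd rfl h
    · rw [if_neg hμ, coeff_zero] at h; exact absurd rfl h
  | succ c ih =>
    obtain ⟨i0, hi0⟩ := exists_pos_of_sum_pos ν (by omega)
    obtain ⟨ν', rfl⟩ := finsupp_decompose ν i0 hi0
    have hsum' : ∑ i, ν' i = c := by
      have := sum_single_apply (n := n) i0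
      simp only [Finsupp.add_apply, Finset.sum_add_distrib] at hc
      omega
    rw [symPowProd_add_single] at h
    -- expand coeff μ of the product
    have h1 : coeff μ (symPowFactor K n i0 * symPowProd K n ν') =
        ∑ j : Fin n, X (j, i0) *
          (if j ∈ μ.support then coeff (μ - Finsupp.single j 1) (symPowProd K n ν')
           else 0) := by
      rw [symPowFactor, Finset.sum_mul, coeff_sum]
      exact Finset.sum_congr rfl fun j _ => by
        rw [mul_assoc, coeff_C_mul, coeff_X_mul']
    rw [h1, coeff_sum] at h
    obtain ⟨j, -, hj⟩ := Finset.exists_ne_zero_of_sum_ne_zero h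
    rw [coeff_X_mul'] at hj
    split_ifs at hj with h2 h3
    · -- h2 : (j,i0) ∈ B.support, h3 : j ∈ μ.support
      have hμj : 1 ≤ μ j := Nat.one_le_iff_ne_zero.mpr (Finsupp.mem_support_iff.mp h3)
      have hBj : 1 ≤ B (j, i0) := Nat.one_le_iff_ne_zero.mpr (Finsupp.mem_support_iff.mp h2)
      obtain ⟨μ', hμeq⟩ := finsupp_decompose μ j hμj
      obtain ⟨B', hBeq⟩ := finsupp_decompose B (j, i0) hBj
      have hμ' : μ - Finsupp.single j 1 = μ' := by
        rw [hμeq]; ext i; simp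
      have hB' : B - Finsupp.single (j, i0) 1 = B' := by
        rw [hBeq]; ext p; simp
      rw [hμ', hB'] at hj
      obtain ⟨hrow, hcol⟩ := ih ν' hsum' μ' B' hj
      constructor
      · intro j'
        have e1 := sum_single_pair_fst (n := n) j i0 j'
        have e2 : μ j' = μ' j' + (if j = j' then 1 else 0) := by
          rw [hμeq]; simp [Finsupp.single_apply]
        rw [hBeq, hμeq]
        simp only [Finsupp.add_apply, Finset.sum_add_distrib]
        rw [← hrow j', e1]
        simp [Finsupp.single_apply]
      · intro i
        have e1 := sum_single_pair_snd (n := n) j i0 i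
        have e2 : (ν' + Finsupp.single i0 1 : Fin n →₀ ℕ) i = ν' i + (if i0 = i then 1 else 0) := by
          simp [Finsupp.single_apply]
        rw [hBeq]
        simp only [Finsupp.add_apply, Finset.sum_add_distrib]
        rw [← hcol i, e1]
        simp [Finsupp.single_apply]
    · simp at hj
    · simp at hj

/-- positivity of multinomial coefficients, as coefficients of `(∑ Xⱼ)^q` over `ℕ`. -/
lemma coeff_sum_X_pow_pos (q : ℕ) (μ : Fin n →₀ ℕ) (h : ∑ j, μ j = q) :
    0 < coeff μ ((∑ j : Fin n, X j : MvPolynomial (Fin n) ℕ) ^ q) := by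
  induction q generalizing μ with
  | zero =>
    have hμ : μ = 0 := by
      ext j; exact (Finset.sum_eq_zero_iff.mp h) j (Finset.mem_univ j)
    subst hμ
    simp
  | succ q ih =>
    obtain ⟨j0, hj0⟩ := exists_pos_of_sum_pos μ (by omega)
    obtain ⟨μ', hμeq⟩ := finsupp_decompose μ j0 hj0
    rw [pow_succ, Finset.mul_sum, coeff_sum]
    refine Finset.sum_pos' (fun j _ => Nat.zero_le _) ⟨j0, Finset.mem_univ _, ?_⟩
    rw [coeff_mul_X', if_pos (Finsupp.mem_support_iff.mpr (by omega))]
    have hμ' : μ - Finsupp.single j0 1 = μ' := by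
      rw [hμeq]; ext i; simp
    rw [hμ']
    refine ih μ' ?_
    have := sum_single_apply (n := n) j0
    rw [hμeq] at h
    simp only [Finsupp.add_apply, Finset.sum_add_distrib] at h
    omega

lemma symPowProd_coeff_ne_zero [CharZero K] (ν μ : Fin n →₀ ℕ)
    (h : ∑ j, μ j = ∑ i, ν i) :
    coeff μ (symPowProd K n ν) ≠ 0 := by
  intro h0
  set q := ∑ i, ν i with hq
  -- evaluate all t-variables at 1
  have hmap : MvPolynomial.map (eval (fun _ => (1 : K))) (symPowProd K n ν)
      = (∑ j : Fin n, X j : MvPolynomial (Fin n) K) ^ q := by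
    rw [symPowProd, map_prod]
    have : ∀ i : Fin n, (MvPolynomial.map (eval (fun _ => (1 : K))))
        ((symPowFactor K n i) ^ (ν i)) = (∑ j : Fin n, X j : MvPolynomial (Fin n) K) ^ (ν i) := by
      intro i
      rw [map_pow]
      congr 1
      simp [symPowFactor]
    rw [Finset.prod_congr rfl fun i _ => this i, Finset.prod_pow_eq_pow_sum]
  have hcast : ((∑ j : Fin n, X j : MvPolynomial (Fin n) K)) ^ q
      = MvPolynomial.map (Nat.castRingHom K) ((∑ j : Fin n, X j : MvPolynomial (Fin n) ℕ) ^ q) := by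
    rw [map_pow]
    congr 1
    simp
  have h1 : coeff μ (MvPolynomial.map (eval (fun _ => (1 : K))) (symPowProd K n ν)) = 0 := by
    rw [coeff_map, h0, map_zero]
  rw [hmap, hcast, coeff_map] at h1
  have h2 : coeff μ ((∑ j : Fin n, X j : MvPolynomial (Fin n) ℕ) ^ q) = 0 :=
    Nat.cast_eq_zero.mp h1
  exact (coeff_sum_X_pow_pos q μ h).ne' h2

end Aux

set_option synthInstance.maxHeartbeats 1000000 in
/-- Let `K` be a field of characteristic zero and `L = K(t_{ij})` the rational
function field in the entries of a generic `n × n` matrix `M = (t_{ij})`.  The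
entries of the `q`-th symmetric power `Sym^q(M)` — the matrix of the `L`-linear
endomorphism of the degree-`q` part of `L[x_1,…,x_n]` induced by
`x_i ↦ ∑_j t_{ji} x_j`, whose `(μ, ν)` entry is the coefficient of `x^μ` in
`∏_i (t_{1i}x_1 + ⋯ + t_{ni}x_n)^{ν_i}` — are linearly independent over `K`. -/
theorem symPow_genericMatrix_entries_linearIndependent
    (K : Type*) [Field K] [CharZero K] (n q : ℕ) (hq : 1 ≤ q) :
    LinearIndependent K
      (fun P : {P : (Fin n →₀ ℕ) × (Fin n →₀ ℕ) //
          (P.1.sum fun _ k => k) = q ∧ (P.2.sum fun _ k => k) = q} =>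
        MvPolynomial.coeff P.1.1
          (∏ i : Fin n,
            (∑ j : Fin n,
              MvPolynomial.C ((algebraMap (MvPolynomial (Fin n × Fin n) K)
                  (FractionRing (MvPolynomial (Fin n × Fin n) K)))
                  (MvPolynomial.X (j, i))) *
                MvPolynomial.X (R := FractionRing (MvPolynomial (Fin n × Fin n) K)) j)
              ^ (P.1.2 i))) := by
  classical
  set R := MvPolynomial (Fin n × Fin n) K with hR
  set L := FractionRing R with hL
  set ι := {P : (Fin n →₀ ℕ) × (Fin n →₀ ℕ) //
      (P.1.sum fun _ k => k) = q ∧ (P.2.sum fun _ k => k) = q} with hι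
  let e : ι → R := fun P => coeff P.1.1 (symPowProd K n P.1.2)
  have sums : ∀ P : ι, (∑ j, P.1.1 j = q) ∧ (∑ i, P.1.2 i = q) := by
    intro P
    have h1 := P.2.1
    have h2 := P.2.2
    rw [Finsupp.sum_fintype _ _ (fun _ => rfl)] at h1 h2
    exact ⟨h1, h2⟩
  have hLI : LinearIndependent K e := by
    rw [linearIndependent_iff']
    intro s g hsum i0 hi0
    have hne : e i0 ≠ 0 :=
      symPowProd_coeff_ne_zero _ _ (by rw [(sums i0).1, (sums i0).2])
    obtain ⟨d, hd⟩ := MvPolynomial.ne_zero_iff.mp hne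
    have hfacts := symPowProd_support (∑ i, (i0.1.2) i) i0.1.2 rfl i0.1.1 d hd
    have hz := congrArg (coeff d) hsum
    rw [coeff_sum, coeff_zero] at hz
    rw [Finset.sum_eq_single i0 ?_ (fun h => absurd hi0 h)] at hz
    · rw [coeff_smul] at hz
      rcases smul_eq_zero.mp hz with h | h
      · exact h
      · exact absurd h hd
    · intro b hb hbne
      have hcz : coeff d (e b) = 0 := by
        by_contra hc
        have hf2 := symPowProd_support (∑ i, (b.1.2) i) b.1.2 rfl b.1.1 d hc
        refine hbne (Subtype.ext (Prod.ext ?_ ?_))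
        · ext j; rw [hf2.1 j, ← hfacts.1 j]
        · ext i; rw [hf2.2 i, ← hfacts.2 i]
      rw [coeff_smul, hcz, smul_zero]
  let ℓ : R →ₗ[K] L := (IsScalarTower.toAlgHom K R L).toLinearMap
  have hker : LinearMap.ker ℓ = ⊥ :=
    LinearMap.ker_eq_bot.mpr (IsFractionRing.injective R L)
  have hmap := hLI.map' ℓ hker
  have key : (fun P : ι =>
      MvPolynomial.coeff P.1.1
          (∏ i : Fin n,
            (∑ j : Fin n,
              MvPolynomial.C ((algebraMap R L) (MvPolynomial.X (j, i))) *
                MvPolynomial.X (R := L) j) ^ (P.1.2 i))) = ⇑ℓ ∘ e := by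
    funext P
    have hprod : (∏ i : Fin n,
        (∑ j : Fin n,
          MvPolynomial.C ((algebraMap R L) (MvPolynomial.X (j, i))) *
            MvPolynomial.X (R := L) j) ^ (P.1.2 i))
        = MvPolynomial.map (algebraMap R L) (symPowProd K n P.1.2) := by
      rw [symPowProd, map_prod]
      refine Finset.prod_congr rfl fun i _ => ?_
      rw [map_pow]
      congr 1
      simp [symPowFactor]
    rw [hprod, Function.comp_apply, coeff_map]
    rfl
  rw [key]
  exact hmap
end
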